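/- Let E be a saturated empire, let ⟨τ,φ⟩ be a state of E, and let t be a transition such that ⟨τ',φ'⟩ = δ(⟨τ,φ⟩,t) is defined. Then τ ▷t τ' holds, and the Hoare triple {φ} λ(t) {φ'} holds. -/

import Mathlib

/-!
Common semantic framework for "The Ghosts of Empires":
Petri programs, Hoare triples, invariant domains, Owicki-Gries annotations,
territories, empires, saturated empires, focus.
-/

namespace GhostsOfEmpires

/-- Reachable states of a (partial) state machine with transition alphabet `T`. -/
inductive EmpReach {Q T : Type*} (q0 : Q) (δ : Q → T → Option Q) : Q → Prop
  | init : EmpReach q0 δ q0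
  | step {q : Q} {t : T} {q' : Q} : EmpReach q0 δ q → δ q t = some q' → EmpReach q0 δ q'

/-- Restriction of a partial transition function to the reachable part. -/
def restrictδ {Q T : Type*} (q0 : Q) (δ : Q → T → Option Q)
    (q : {q : Q // EmpReach q0 δ q}) (t : T) : Option {q : Q // EmpReach q0 δ q} :=
  match h : δ q.val t with
  | none => none
  | some q' => some ⟨q', EmpReach.step q.property h⟩

/-- A Petri program: places, transitions, flow relation (given by `pre`/`post`),
initial marking, statement labels, error places, and a semantics for statements
(formulas over the program variables are modelled semantically as predicates on `State`,
the type of valuations of the program variables). Since the program is assumed one-safe,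
markings are identified with sets of places. -/
structure PetriNet (Place Trans Stmt State : Type*) where
  pre : Trans → Set Place
  post : Trans → Set Place
  mInit : Set Place
  label : Trans → Stmt
  err : Set Place
  sem : Stmt → State → State → Prop

/-- Owicki-Gries annotation: ghost state type `GS` (the product of the domains of the
ghost variables), invariant mapping `ω` (formulas over program and ghost variables),
ghost update mapping `γ` (executed after the statement of the transition), and
initial ghost valuation `ρ`. -/
structure OG (Place Trans State GS : Type*) where
  ω : Place → State → GS → Prop
  γ : Trans → State → GS → GS
  ρ : GS

/-- The data of an empire: a state machine with laws and territories. -/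
structure EmpireData (Place Trans State Q : Type*) where
  qInit : Q
  δ : Q → Trans → Option Q
  law : Q → State → Prop
  terr : Q → Set (Set Place)

/-- `Q_p`: the set of empire states whose territory contains `p` in some region. -/
def Qp {Place Trans State Q : Type*} (E : EmpireData Place Trans State Q) (p : Place) :
    Set Q :=
  {q | ∃ r ∈ E.terr q, p ∈ r}

/-- The imperial Owicki-Gries annotation of an empire: one ghost variable `g` ranging
over the states `Q`, initialized to `qInit`, updated according to `δ`, and
`ω(p) = ⋁_{q ∈ Q_p} (g = q ∧ law q)`. -/
def imperialOG {Place Trans State Q : Type*} (E : EmpireData Place Trans State Q) :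
    OG Place Trans State Q where
  ω := fun p s g => ∃ q ∈ Qp E p, g = q ∧ E.law q s
  γ := fun t _ g => (E.δ g t).getD g
  ρ := E.qInit

/-- Restriction of an empire given by raw data to its reachable part. -/
def restrictEmpire {Place Trans State Q : Type*} (q0 : Q) (δ0 : Q → Trans → Option Q)
    (law : Q → State → Prop) (terr : Q → Set (Set Place)) :
    EmpireData Place Trans State {q : Q // EmpReach q0 δ0 q} where
  qInit := ⟨q0, EmpReach.init⟩
  δ := restrictδ q0 δ0
  law := fun q => law q.val
  terr := fun q => terr q.val

/-- `m ∈ ⟦τ⟧`: `m` is derived by taking exactly one place from each region of `τ`. -/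
def InTreaty {Place : Type*} (τ : Set (Set Place)) (m : Set Place) : Prop :=
  ∃ f : Set Place → Place, (∀ r ∈ τ, f r ∈ r) ∧ m = {p | ∃ r ∈ τ, p = f r}

namespace PetriNet

variable {Place Trans Stmt State : Type*} (N : PetriNet Place Trans Stmt State)

/-- `m ▷t m'`: transition `t` is enabled in `m` and firing it yields `m'`. -/
def fires (m : Set Place) (t : Trans) (m' : Set Place) : Prop :=
  N.pre t ⊆ m ∧ m' = (m \ N.pre t) ∪ N.post t

/-- Firing sequences. -/
inductive FiringSeq : Set Place → List Trans → Set Place → Prop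
  | nil (m : Set Place) : FiringSeq m [] m
  | cons {m m' m'' : Set Place} {t : Trans} {ts : List Trans} :
      N.fires m t m' → FiringSeq m' ts m'' → FiringSeq m (t :: ts) m''

/-- A marking is reachable if some firing sequence from the initial marking ends in it. -/
def Reachable (m : Set Place) : Prop := ∃ ts, N.FiringSeq N.mInit ts m

/-- The Hoare triple `{φ} st {ψ}` holds. -/
def Hoare (φ : State → Prop) (st : Stmt) (ψ : State → Prop) : Prop :=
  ∀ s s', φ s → N.sem st s s' → ψ s'

/-- Semantics of a sequence of statements. -/
inductive SeqSem : List Stmt → State → State → Prop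
  | nil (s : State) : SeqSem [] s s
  | cons {st : Stmt} {sts : List Stmt} {s s' s'' : State} :
      N.sem st s s' → SeqSem sts s' s'' → SeqSem (st :: sts) s s''

/-- The Petri program is correct: for every firing sequence reaching a marking that
contains an error place, the Hoare triple `{⊤} λ(t1)...λ(tn) {⊥}` holds. -/
def Correct : Prop :=
  ∀ ts m, N.FiringSeq N.mInit ts m → (m ∩ N.err).Nonempty →
    ∀ s s', N.SeqSem (List.map N.label ts) s s' → False

/-- `p` and `t` are co-marked. -/
def coMarked (p : Place) (t : Trans) : Prop :=
  p ∉ N.pre t ∧ ∃ m, N.Reachable m ∧ p ∈ m ∧ N.pre t ⊆ m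

/-- Two places are co-related. -/
def coRelated (p p' : Place) : Prop :=
  p ≠ p' ∧ ∃ m, N.Reachable m ∧ p ∈ m ∧ p' ∈ m

/-- A region: a nonempty set of places that are pairwise not co-related. -/
def IsRegion (r : Set Place) : Prop :=
  r.Nonempty ∧ ∀ p1 ∈ r, ∀ p2 ∈ r, ¬ N.coRelated p1 p2

/-- A territory: a set of pairwise disjoint regions all of whose treaty members are
reachable markings. -/
def IsTerritory (τ : Set (Set Place)) : Prop :=
  (∀ r ∈ τ, N.IsRegion r) ∧
  (∀ r1 ∈ τ, ∀ r2 ∈ τ, r1 ≠ r2 → r1 ∩ r2 = ∅) ∧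
  (∀ m, InTreaty τ m → N.Reachable m)

/-- `t` is enabled in the territory `τ`: every predecessor place lies in a distinct
region of `τ`. -/
def terrEnabled (t : Trans) (τ : Set (Set Place)) : Prop :=
  ∃ f : Place → Set Place, (∀ p ∈ N.pre t, f p ∈ τ ∧ p ∈ f p) ∧
    ∀ p1 ∈ N.pre t, ∀ p2 ∈ N.pre t, p1 ≠ p2 → f p1 ≠ f p2

/-- `τ ▷t τ'`: the firing relation on territories. -/
def terrFires (τ : Set (Set Place)) (t : Trans) (τ' : Set (Set Place)) : Prop :=
  ∃ f f' : Place → Set Place,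
    (∀ p ∈ N.pre t, f p ∈ τ ∧ p ∈ f p) ∧
    (∀ p1 ∈ N.pre t, ∀ p2 ∈ N.pre t, p1 ≠ p2 → f p1 ≠ f p2) ∧
    (∀ p ∈ N.post t, N.IsRegion (f' p) ∧ p ∈ f' p) ∧
    (∀ p1 ∈ N.post t, ∀ p2 ∈ N.post t, p1 ≠ p2 → f' p1 ≠ f' p2) ∧
    τ' = (τ \ {r | ∃ p ∈ N.pre t, r = f p}) ∪ {r | ∃ p ∈ N.post t, r = f' p}

/-- The bystander regions of `t` in `τ`. -/
def bystanders (t : Trans) (τ : Set (Set Place)) : Set (Set Place) :=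
  {r ∈ τ | r ∩ N.pre t = ∅}

/-- The replaced territory `replace(t,τ)`. -/
def replaceT (t : Trans) (τ : Set (Set Place)) : Set (Set Place) :=
  N.bystanders t τ ∪ {r | ∃ p ∈ N.post t, r = {p}}

/-- `τ` is extendable with `t`. -/
def extendable (t : Trans) (τ : Set (Set Place)) : Prop :=
  N.terrEnabled t τ ∧ (∃ p, N.pre t = {p}) ∧ (∃ p', N.post t = {p'}) ∧
    ∀ r ∈ τ, (r ∩ N.pre t).Nonempty → ∀ p'' ∈ r, ∀ p' ∈ N.post t, ¬ N.coRelated p' p''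

/-- The extended territory `extend(t,τ)`: the (unique) region meeting `•t` is enlarged
by the successor place. -/
def extendT (t : Trans) (τ : Set (Set Place)) : Set (Set Place) :=
  N.bystanders t τ ∪ {r' | ∃ r ∈ τ, (r ∩ N.pre t).Nonempty ∧ r' = r ∪ N.post t}

/-- An invariant domain for `N`: a finite set `A` of formulas (modelled semantically)
containing `⊥` and `⊤`, and a post operator such that `{φ} λ(t) {post(φ,t)}` always holds. -/
structure InvDomain where
  A : Set (State → Prop)
  postF : (State → Prop) → Trans → (State → Prop)
  finA : A.Finite
  bot_mem : (fun _ => False) ∈ A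
  top_mem : (fun _ => True) ∈ A
  post_mem : ∀ φ ∈ A, ∀ t, postF φ t ∈ A
  post_hoare : ∀ φ ∈ A, ∀ t, N.Hoare φ (N.label t) (postF φ t)

/-- Reachable abstract configurations, generically over a type `Φ` of laws with a post
operator `postA` and top element `φtop`. -/
inductive AbsReachG {Φ : Type*} (postA : Φ → Trans → Φ) (φtop : Φ) : Set Place → Φ → Prop
  | init : AbsReachG postA φtop N.mInit φtop
  | step {m : Set Place} {φ : Φ} {t : Trans} {m' : Set Place} :
      AbsReachG postA φtop m φ → N.fires m t m' → AbsReachG postA φtop m' (postA φ t)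

/-- The invariant domain is safe: every reachable abstract configuration at a marking
containing an error place has law equivalent to `⊥`. -/
def SafeDomain (D : InvDomain N) : Prop :=
  ∀ m φ, N.AbsReachG D.postF (fun _ => True) m φ → (m ∩ N.err).Nonempty → ∀ s, ¬ φ s

/-- Validity of an Owicki-Gries annotation: initial, inductive, interference-free, safe. -/
structure OGValid {GS : Type*} (og : OG Place Trans State GS) : Prop where
  initialCond : ∀ p ∈ N.mInit, ∀ s, og.ω p s og.ρ
  inductiveCond : ∀ t s g s', (∀ p ∈ N.pre t, og.ω p s g) →
    N.sem (N.label t) s s' → ∀ p ∈ N.post t, og.ω p s' (og.γ t s' g)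
  interferenceFree : ∀ t p, N.coMarked p t → ∀ s g s',
    og.ω p s g → (∀ p' ∈ N.pre t, og.ω p' s g) →
    N.sem (N.label t) s s' → og.ω p s' (og.γ t s' g)
  safeCond : ∀ p ∈ N.err, ∀ s g, ¬ og.ω p s g

/-- The naive Owicki-Gries annotation `OG_naive(A,post)`: the ghost state is the set of
places `p` whose boolean ghost variable `g_p` is true; `ω(p)` is the disjunction over all
reachable markings `m` containing `p` of `χ(m) ∧ β(m)`. -/
def naiveOG (D : InvDomain N) : OG Place Trans State (Set Place) where
  ω := fun p s g => ∃ m, N.Reachable m ∧ p ∈ m ∧ g = m ∧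
    ∃ φ, N.AbsReachG D.postF (fun _ => True) m φ ∧ φ s
  γ := fun t _ g => (g \ (N.pre t \ N.post t)) ∪ (N.post t \ N.pre t)
  ρ := N.mInit

/-- Validity of an empire. -/
structure ValidEmpire {Q : Type*} (E : EmpireData Place Trans State Q) : Prop where
  terrOK : ∀ q, N.IsTerritory (E.terr q)
  initialLaw : ∀ s, E.law E.qInit s
  initialTerr : InTreaty (E.terr E.qInit) N.mInit
  inductiveLaw : ∀ q t, N.terrEnabled t (E.terr q) →
    (∃ q', E.δ q t = some q' ∧ N.Hoare (E.law q) (N.label t) (E.law q')) ∨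
      N.Hoare (E.law q) (N.label t) (fun _ => False)
  inductiveTerr : ∀ q t q', E.δ q t = some q' → N.terrFires (E.terr q) t (E.terr q')
  safeCond : ∀ q, (∃ r ∈ E.terr q, (r ∩ N.err).Nonempty) → ∀ s, ¬ E.law q s

/-- The initial territory `τ_init = {{p} | p ∈ m_init}`. -/
def tauInit : Set (Set Place) := {r | ∃ p ∈ N.mInit, r = {p}}

/-- `SaturateG postA φ rb τ τ'` means `τ' ∈ saturate(φ, rb, τ)` (saturated successors). -/
inductive SaturateG {Φ : Type*} (postA : Φ → Trans → Φ) (φ : Φ) (rb : Set (Set Place)) :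
    Set (Set Place) → Set (Set Place) → Prop
  | base {τ : Set (Set Place)} :
      (¬ ∃ t, N.extendable t τ ∧ ¬ N.terrFires τ t τ ∧ postA φ t = φ ∧
        rb ⊆ N.bystanders t τ) →
      SaturateG postA φ rb τ τ
  | step {τ : Set (Set Place)} {t : Trans} {τ' : Set (Set Place)} :
      N.extendable t τ → ¬ N.terrFires τ t τ → postA φ t = φ →
      rb ⊆ N.bystanders t τ → SaturateG postA φ rb (N.extendT t τ) τ' →
      SaturateG postA φ rb τ τ'

/-- `(q0, δ0)` is the data of a saturated empire (before restriction to the reachable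
part), generically over a type `Φ` of laws with post operator `postA`, interpretation
`interp` and top element `φtop`. -/
structure IsSaturatedG {Φ : Type*} (postA : Φ → Trans → Φ) (interp : Φ → State → Prop)
    (φtop : Φ) (q0 : Set (Set Place) × Φ)
    (δ0 : Set (Set Place) × Φ → Trans → Option (Set (Set Place) × Φ)) : Prop where
  initCond : ∃ τ, N.SaturateG postA φtop ∅ N.tauInit τ ∧ q0 = (τ, φtop)
  undefCond : ∀ τ φ t, (¬ N.terrEnabled t τ ∨ ∀ s, ¬ interp (postA φ t) s) →
    δ0 (τ, φ) t = none
  selfCond : ∀ τ φ t, N.terrEnabled t τ → (∃ s, interp (postA φ t) s) →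
    N.terrFires τ t τ → postA φ t = φ → δ0 (τ, φ) t = some (τ, φ)
  stepCond : ∀ τ φ t, N.terrEnabled t τ → (∃ s, interp (postA φ t) s) →
    ¬ (N.terrFires τ t τ ∧ postA φ t = φ) →
    ∃ τ', N.SaturateG postA (postA φ t) (N.bystanders t τ) (N.replaceT t τ) τ' ∧
      δ0 (τ, φ) t = some (τ', postA φ t)

open Classical in
/-- The transition function of the naive empire. -/
noncomputable def naiveδ (D : InvDomain N) (q : Set (Set Place) × (State → Prop))
    (t : Trans) : Option (Set (Set Place) × (State → Prop)) :=
  if N.terrEnabled t q.1 ∧ ∃ s, D.postF q.2 t s then some (N.replaceT t q.1, D.postF q.2 t)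
  else none

/-- The naive empire `E_naive(A,post)`: the reachable part of the empire whose states are
pairs of territories and laws, with initial state `⟨τ_init, ⊤⟩`. -/
noncomputable def naiveEmpire (D : InvDomain N) :
    EmpireData Place Trans State
      {q : Set (Set Place) × (State → Prop) //
        EmpReach (N.tauInit, fun _ => True) (N.naiveδ D) q} :=
  restrictEmpire (N.tauInit, fun _ => True) (N.naiveδ D) Prod.snd Prod.fst

open Classical in
/-- The product post operator of a family of invariant domains, acting on vectors of
component formulas (the vector `φv` represents the conjunction `⋀_i φv i`). -/
noncomputable def prodPost {n : ℕ} (Ds : Fin n → InvDomain N)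
    (φv : Fin n → State → Prop) (t : Trans) : Fin n → State → Prop :=
  if ∀ i, ∃ s, (Ds i).postF (φv i) t s then fun i => (Ds i).postF (φv i) t
  else fun _ _ => False

/-- Safety of the product invariant domain. -/
def prodSafe {n : ℕ} (Ds : Fin n → InvDomain N) : Prop :=
  ∀ m φv, N.AbsReachG (N.prodPost Ds) (fun _ _ => True) m φv →
    (m ∩ N.err).Nonempty → ∀ s, ¬ ∀ i, φv i s

/-- A focus on a saturated empire (given by raw data `(q0, δ0)` over vector laws). -/
structure IsFocus {n : ℕ} (Ds : Fin n → InvDomain N)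
    (q0 : Set (Set Place) × (Fin n → State → Prop))
    (δ0 : Set (Set Place) × (Fin n → State → Prop) → Trans →
      Option (Set (Set Place) × (Fin n → State → Prop)))
    (ℓ : Set (Set Place) × (Fin n → State → Prop) → Set Place → Set (Fin n)) :
    Prop where
  safeCond : ∀ q, EmpReach q0 δ0 q → ∀ t, N.terrEnabled t q.1 → δ0 q t = none →
    ∃ r ∈ q.1, ∃ i, (r ∩ N.pre t).Nonempty ∧ (∀ s, ¬ (Ds i).postF (q.2 i) t s) ∧ i ∈ ℓ q r
  inductiveEdge : ∀ q q' t, EmpReach q0 δ0 q → δ0 q t = some q' →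
    ∀ r' ∈ q'.1, (r' ∩ N.post t).Nonempty → ∀ i ∈ ℓ q' r',
      ∃ r ∈ q.1, (r ∩ N.pre t).Nonempty ∧ i ∈ ℓ q r
  bystandersCond : ∀ q q' t, EmpReach q0 δ0 q → δ0 q t = some q' →
    ∀ r ∈ N.bystanders t q.1, ∀ i ∈ ℓ q' r, i ∈ ℓ q r

end PetriNet

/-- A saturated empire (over scalar laws): the reachable part of the data `(q0, δ0)`. -/
def saturatedEmpire {Place Trans State : Type*}
    (q0 : Set (Set Place) × (State → Prop))
    (δ0 : Set (Set Place) × (State → Prop) → Trans →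
      Option (Set (Set Place) × (State → Prop))) :
    EmpireData Place Trans State {q // EmpReach q0 δ0 q} :=
  restrictEmpire q0 δ0 Prod.snd Prod.fst

/-- The focused law `law_p(q) = ⋀ {φ_i | ∃ r ∈ terr(q). i ∈ ℓ(q,r) ∧ p ∈ r}`. -/
def lawP {Place State : Type*} {n : ℕ}
    (ℓ : Set (Set Place) × (Fin n → State → Prop) → Set Place → Set (Fin n))
    (q : Set (Set Place) × (Fin n → State → Prop)) (p : Place) : State → Prop :=
  fun s => ∀ i, (∃ r ∈ q.1, i ∈ ℓ q r ∧ p ∈ r) → q.2 i s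

/-- `law_X(q) = ⋀_{p ∈ X} law_p(q)`. -/
def lawX {Place State : Type*} {n : ℕ}
    (ℓ : Set (Set Place) × (Fin n → State → Prop) → Set Place → Set (Fin n))
    (q : Set (Set Place) × (Fin n → State → Prop)) (X : Set Place) : State → Prop :=
  fun s => ∀ p ∈ X, lawP ℓ q p s

/-- The focused imperial Owicki-Gries annotation `OG_{E,ℓ}` of the saturated empire
given by `(q0, δ0)` (restricted to its reachable part) with focus `ℓ`:
`ω(p) = ⋁_{q ∈ Q_p} (g = q ∧ law_p(q))`. -/
def focusedOG {Place Trans State : Type*} {n : ℕ}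
    (q0 : Set (Set Place) × (Fin n → State → Prop))
    (δ0 : Set (Set Place) × (Fin n → State → Prop) → Trans →
      Option (Set (Set Place) × (Fin n → State → Prop)))
    (ℓ : Set (Set Place) × (Fin n → State → Prop) → Set Place → Set (Fin n)) :
    OG Place Trans State {q // EmpReach q0 δ0 q} where
  ω := fun p s g => ∃ q : {q // EmpReach q0 δ0 q},
    (∃ r ∈ q.val.1, p ∈ r) ∧ g = q ∧ lawP ℓ q.val p s
  γ := fun t _ g => (restrictδ q0 δ0 g t).getD g
  ρ := ⟨q0, EmpReach.init⟩

end GhostsOfEmpires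

namespace GhostsOfEmpires
namespace PetriNet

variable {Place Trans Stmt State : Type*} {N : PetriNet Place Trans Stmt State}

lemma coRelated_symm {p p' : Place} (h : N.coRelated p p') : N.coRelated p' p := by
  obtain ⟨hne, m, hm, h1, h2⟩ := h
  exact ⟨hne.symm, m, hm, h2, h1⟩

lemma firingSeq_snoc {m m' m'' : Set Place} {ts : List Trans} {t : Trans}
    (h : N.FiringSeq m ts m') (h2 : N.fires m' t m'') :
    N.FiringSeq m (ts ++ [t]) m'' := by
  induction h with
  | nil m => exact .cons h2 (.nil _)
  | cons hf _ ih => exact .cons hf (ih h2)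

lemma reachable_fires {m m' : Set Place} {t : Trans} (h : N.Reachable m)
    (hf : N.fires m t m') : N.Reachable m' := by
  obtain ⟨ts, hts⟩ := h
  exact ⟨ts ++ [t], firingSeq_snoc hts hf⟩

lemma treaty_reachable {τ : Set (Set Place)} (hτ : N.IsTerritory τ)
    (c : Set Place → Place) (hc : ∀ r ∈ τ, c r ∈ r) :
    N.Reachable {p | ∃ r ∈ τ, p = c r} :=
  hτ.2.2 _ ⟨c, hc, rfl⟩

lemma region_eq_of_mem {τ : Set (Set Place)} (hτ : N.IsTerritory τ)
    {r1 r2 : Set Place} (h1 : r1 ∈ τ) (h2 : r2 ∈ τ) {p : Place}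
    (hp1 : p ∈ r1) (hp2 : p ∈ r2) : r1 = r2 := by
  by_contra hne
  have h := hτ.2.1 r1 h1 r2 h2 hne
  exact absurd (Set.mem_inter hp1 hp2) (by simp [h])

lemma treaty_fire {τ : Set (Set Place)} {t : Trans} (hτ : N.IsTerritory τ)
    (hen : N.terrEnabled t τ) (c : Set Place → Place)
    (hc : ∀ r ∈ τ, r ∩ N.pre t = ∅ → c r ∈ r) :
    N.Reachable ({p | ∃ r ∈ τ, r ∩ N.pre t = ∅ ∧ p = c r} ∪ N.post t) := by
  classical
  obtain ⟨f, hf1, hf2⟩ := hen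
  set c' : Set Place → Place :=
    fun r => if h : (r ∩ N.pre t).Nonempty then h.choose else c r with hc'def
  have hc' : ∀ r ∈ τ, c' r ∈ r := by
    intro r hr
    by_cases h : (r ∩ N.pre t).Nonempty
    · simp only [hc'def, dif_pos h]; exact h.choose_spec.1
    · simp only [hc'def, dif_neg h]
      exact hc r hr (Set.not_nonempty_iff_eq_empty.mp h)
  have hreach := treaty_reachable hτ c' hc'
  have huniq : ∀ q ∈ N.pre t, ∀ x, x ∈ f q ∩ N.pre t → x = q := by
    intro q hq x hx
    by_contra hne
    have hxr := hf1 x hx.2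
    have heq : f x = f q := region_eq_of_mem hτ hxr.1 (hf1 q hq).1 hxr.2 hx.1
    exact hf2 x hx.2 q hq hne heq
  have hcfq : ∀ q ∈ N.pre t, c' (f q) = q := by
    intro q hq
    have hne : ((f q) ∩ N.pre t).Nonempty := ⟨q, (hf1 q hq).2, hq⟩
    simp only [hc'def, dif_pos hne]
    exact huniq q hq _ hne.choose_spec
  have hsub : N.pre t ⊆ {p | ∃ r ∈ τ, p = c' r} := by
    intro q hq
    exact ⟨f q, (hf1 q hq).1, (hcfq q hq).symm⟩
  have hreach' := reachable_fires hreach (⟨hsub, rfl⟩ :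
    N.fires _ t (({p | ∃ r ∈ τ, p = c' r} \ N.pre t) ∪ N.post t))
  have hset : {p | ∃ r ∈ τ, p = c' r} \ N.pre t
      = {p | ∃ r ∈ τ, r ∩ N.pre t = ∅ ∧ p = c r} := by
    ext p
    constructor
    · rintro ⟨⟨r, hr, hp⟩, hnp⟩
      by_cases h : (r ∩ N.pre t).Nonempty
      · exfalso
        have hmem : c' r ∈ r ∩ N.pre t := by
          simp only [hc'def, dif_pos h]; exact h.choose_spec
        exact hnp (hp ▸ hmem.2)
      · have he := Set.not_nonempty_iff_eq_empty.mp h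
        refine ⟨r, hr, he, ?_⟩
        simpa only [hc'def, dif_neg h] using hp
    · rintro ⟨r, hr, he, hp⟩
      have hnn : ¬ (r ∩ N.pre t).Nonempty := by simp [he]
      refine ⟨⟨r, hr, by simp only [hc'def, dif_neg hnn]; exact hp⟩, ?_⟩
      intro hmem
      have hpr : p ∈ r := hp ▸ hc r hr he
      exact absurd (Set.mem_inter hpr hmem) (by simp [he])
  rw [hset] at hreach'
  exact hreach'

lemma mInit_reachable : N.Reachable N.mInit := ⟨[], .nil _⟩

lemma tauInit_territory : N.IsTerritory N.tauInit := by
  refine ⟨?_, ?_, ?_⟩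
  · rintro r ⟨p, hp, rfl⟩
    refine ⟨⟨p, rfl⟩, ?_⟩
    intro p1 hp1 p2 hp2 hco
    rw [Set.mem_singleton_iff] at hp1 hp2
    exact hco.1 (hp1.trans hp2.symm)
  · rintro r1 ⟨p1, hp1, rfl⟩ r2 ⟨p2, hp2, rfl⟩ hne
    rw [Set.singleton_inter_eq_empty, Set.mem_singleton_iff]
    intro h
    exact hne (by rw [h])
  · rintro m ⟨f, hf, rfl⟩
    have hm : {p | ∃ r ∈ N.tauInit, p = f r} = N.mInit := by
      ext p
      constructor
      · rintro ⟨r, ⟨q, hq, rfl⟩, rfl⟩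
        have hfq := hf _ ⟨q, hq, rfl⟩
        rw [Set.mem_singleton_iff] at hfq
        rw [hfq]; exact hq
      · intro hp
        refine ⟨{p}, ⟨p, hp, rfl⟩, ?_⟩
        have hfp := hf {p} ⟨p, hp, rfl⟩
        rw [Set.mem_singleton_iff] at hfp
        exact hfp.symm
    rw [hm]
    exact mInit_reachable

lemma replaceT_territory {τ : Set (Set Place)} {t : Trans}
    (hτ : N.IsTerritory τ) (hen : N.terrEnabled t τ) :
    N.IsTerritory (N.replaceT t τ) := by
  classical
  have hkey : ∀ r ∈ N.bystanders t τ, ∀ p ∈ N.post t, p ∈ r → r = {p} := by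
    intro r hr p hp hpr
    by_contra hne
    have hex : ∃ q ∈ r, q ≠ p := by
      by_contra h
      push_neg at h
      exact hne (Set.eq_singleton_iff_unique_mem.mpr ⟨hpr, fun q hq => h q hq⟩)
    obtain ⟨q, hq, hqp⟩ := hex
    set c : Set Place → Place := fun r' => if r' = r then q else
      if h : r'.Nonempty then h.choose else q with hcdef
    have hre := treaty_fire hτ hen c (fun r' hr' _ => by
      by_cases h : r' = r
      · simp only [hcdef, if_pos h]; exact h ▸ hq
      · have hne' := (hτ.1 r' hr').1
        simp only [hcdef, if_neg h, dif_pos hne']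
        exact hne'.choose_spec)
    have hqm : q ∈ {p | ∃ r' ∈ τ, r' ∩ N.pre t = ∅ ∧ p = c r'} ∪ N.post t :=
      Or.inl ⟨r, hr.1, hr.2, by simp [hcdef]⟩
    have hpm : p ∈ {p | ∃ r' ∈ τ, r' ∩ N.pre t = ∅ ∧ p = c r'} ∪ N.post t :=
      Or.inr hp
    exact (hτ.1 r hr.1).2 q hq p hpr ⟨hqp, _, hre, hqm, hpm⟩
  refine ⟨?_, ?_, ?_⟩
  · rintro r (hr | ⟨p, hp, rfl⟩)
    · exact hτ.1 r hr.1
    · refine ⟨⟨p, rfl⟩, ?_⟩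
      intro p1 hp1 p2 hp2 hco
      rw [Set.mem_singleton_iff] at hp1 hp2
      exact hco.1 (hp1.trans hp2.symm)
  · rintro r1 h1 r2 h2 hne
    rcases h1 with h1 | ⟨p1, hp1, rfl⟩ <;> rcases h2 with h2 | ⟨p2, hp2, rfl⟩
    · exact hτ.2.1 r1 h1.1 r2 h2.1 hne
    · rw [Set.inter_singleton_eq_empty]
      intro hmem
      exact hne (hkey r1 h1 p2 hp2 hmem)
    · rw [Set.singleton_inter_eq_empty]
      intro hmem
      exact hne (hkey r2 h2 p1 hp1 hmem).symm
    · rw [Set.singleton_inter_eq_empty, Set.mem_singleton_iff]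
      intro h
      exact hne (by rw [h])
  · rintro m ⟨f, hf, rfl⟩
    have hre := treaty_fire hτ hen f (fun r hr h0 => hf r (Or.inl ⟨hr, h0⟩))
    have hseteq : ({p | ∃ r ∈ τ, r ∩ N.pre t = ∅ ∧ p = f r} ∪ N.post t)
        = {p | ∃ r ∈ N.replaceT t τ, p = f r} := by
      ext p
      constructor
      · rintro (⟨r, hr, h0, hp⟩ | hp)
        · exact ⟨r, Or.inl ⟨hr, h0⟩, hp⟩
        · refine ⟨{p}, Or.inr ⟨p, hp, rfl⟩, ?_⟩
          have h := hf {p} (Or.inr ⟨p, hp, rfl⟩)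
          rw [Set.mem_singleton_iff] at h
          exact h.symm
      · rintro ⟨r, (hr | ⟨p', hp', rfl⟩), hp⟩
        · exact Or.inl ⟨r, hr.1, hr.2, hp⟩
        · have h := hf {p'} (Or.inr ⟨p', hp', rfl⟩)
          rw [Set.mem_singleton_iff] at h
          exact Or.inr (by rw [hp, h]; exact hp')
    rw [hseteq] at hre
    exact hre

lemma extendT_eq {σ : Set (Set Place)} {t' : Trans} {a : Place} {ra : Set Place}
    (hσ : N.IsTerritory σ) (hpre : N.pre t' = {a}) (hra : ra ∈ σ) (haa : a ∈ ra) :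
    N.extendT t' σ = (σ \ {ra}) ∪ {ra ∪ N.post t'} := by
  ext r
  constructor
  · rintro (⟨hr, h0⟩ | ⟨r0, hr0, hne, rfl⟩)
    · have hanr : a ∉ r := Set.inter_singleton_eq_empty.mp (hpre ▸ h0)
      exact Or.inl ⟨hr, fun heq => hanr ((Set.mem_singleton_iff.mp heq) ▸ haa)⟩
    · obtain ⟨x, hx1, hx2⟩ := hne
      rw [hpre, Set.mem_singleton_iff] at hx2
      subst hx2
      have : r0 = ra := region_eq_of_mem hσ hr0 hra hx1 haa
      rw [this]
      exact Or.inr rfl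
  · rintro (⟨hr, hne⟩ | hr)
    · refine Or.inl ⟨hr, ?_⟩
      rw [hpre, Set.inter_singleton_eq_empty]
      intro haR
      exact hne (Set.mem_singleton_iff.mpr (region_eq_of_mem hσ hr hra haR haa))
    · rw [Set.mem_singleton_iff] at hr
      exact Or.inr ⟨ra, hra, ⟨a, haa, by rw [hpre]; rfl⟩, hr⟩

lemma extendT_territory {σ : Set (Set Place)} {t' : Trans}
    (hσ : N.IsTerritory σ) (hext : N.extendable t' σ) :
    N.IsTerritory (N.extendT t' σ) := by
  classical
  obtain ⟨hen, ⟨a, hpre⟩, ⟨b, hpost⟩, hnoco⟩ := hext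
  obtain ⟨f, hf1, hf2⟩ := hen
  obtain ⟨hra, haa⟩ := hf1 a (by rw [hpre]; rfl)
  set ra := f a with hradef
  have hraint : (ra ∩ N.pre t').Nonempty := ⟨a, haa, by rw [hpre]; rfl⟩
  have hbpost : b ∈ N.post t' := by rw [hpost]; rfl
  have heq := extendT_eq hσ hpre hra haa
  have hclaim : ∀ r0 ∈ σ, b ∈ r0 → r0 = ra := by
    intro r0 hr0 hb
    by_contra hne
    have hanr0 : a ∉ r0 := fun h => hne (region_eq_of_mem hσ hr0 hra h haa)
    have hba : b ≠ a := fun h => hanr0 (h ▸ hb)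
    set c : Set Place → Place := fun r => if r = ra then a else if r = r0 then b
      else if h : r.Nonempty then h.choose else a with hcdef
    have hre := treaty_reachable hσ c (fun r hr => by
      by_cases h1 : r = ra
      · simp only [hcdef, if_pos h1]; exact h1 ▸ haa
      · by_cases h2 : r = r0
        · simp only [hcdef, if_neg h1, if_pos h2]; exact h2 ▸ hb
        · have hne' := (hσ.1 r hr).1
          simp only [hcdef, if_neg h1, if_neg h2, dif_pos hne']
          exact hne'.choose_spec)
    have ham : a ∈ {p | ∃ r ∈ σ, p = c r} := ⟨ra, hra, by simp [hcdef]⟩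
    have hbm : b ∈ {p | ∃ r ∈ σ, p = c r} :=
      ⟨r0, hr0, by simp [hcdef, hne]⟩
    exact hnoco ra hra hraint a haa b hbpost ⟨hba, _, hre, hbm, ham⟩
  by_cases hbra : b ∈ ra
  · have hid : N.extendT t' σ = σ := by
      rw [heq, hpost]
      have h1 : ra ∪ {b} = ra := Set.union_eq_left.mpr (Set.singleton_subset_iff.mpr hbra)
      rw [h1]
      ext r
      constructor
      · rintro (⟨hr, _⟩ | hr)
        · exact hr
        · rw [Set.mem_singleton_iff] at hr; exact hr ▸ hra
      · intro hr
        by_cases h : r = ra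
        · exact Or.inr (by rw [h]; rfl)
        · exact Or.inl ⟨hr, h⟩
    rw [hid]
    exact hσ
  · have hbno : ∀ r0 ∈ σ, b ∉ r0 := fun r0 h hb => hbra ((hclaim r0 h hb) ▸ hb)
    rw [heq]
    refine ⟨?_, ?_, ?_⟩
    · rintro r (⟨hr, _⟩ | hr)
      · exact hσ.1 r hr
      · rw [Set.mem_singleton_iff] at hr
        subst hr
        refine ⟨⟨a, Or.inl haa⟩, ?_⟩
        intro p1 hp1 p2 hp2 hco
        rcases hp1 with hp1 | hp1 <;> rcases hp2 with hp2 | hp2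
        · exact (hσ.1 ra hra).2 p1 hp1 p2 hp2 hco
        · rw [hpost, Set.mem_singleton_iff] at hp2
          exact hnoco ra hra hraint p1 hp1 p2 (hp2 ▸ hbpost) (coRelated_symm hco)
        · rw [hpost, Set.mem_singleton_iff] at hp1
          exact hnoco ra hra hraint p2 hp2 p1 (hp1 ▸ hbpost) hco
        · rw [hpost, Set.mem_singleton_iff] at hp1 hp2
          exact hco.1 (hp1.trans hp2.symm)
    · rintro r1 h1 r2 h2 hne12
      rcases h1 with ⟨h1, h1ne⟩ | h1 <;> rcases h2 with ⟨h2, h2ne⟩ | h2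
      · exact hσ.2.1 r1 h1 r2 h2 hne12
      · rw [Set.mem_singleton_iff] at h2
        subst h2
        apply Set.eq_empty_iff_forall_notMem.mpr
        rintro x ⟨hx1, hx2 | hx2⟩
        · have := hσ.2.1 r1 h1 ra hra (fun h => h1ne (Set.mem_singleton_iff.mpr h))
          exact absurd (Set.mem_inter hx1 hx2) (by simp [this])
        · rw [hpost, Set.mem_singleton_iff] at hx2
          exact hbno r1 h1 (hx2 ▸ hx1)
      · rw [Set.mem_singleton_iff] at h1
        subst h1
        apply Set.eq_empty_iff_forall_notMem.mpr
        rintro x ⟨hx1 | hx1, hx2⟩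
        · have := hσ.2.1 r2 h2 ra hra (fun h => h2ne (Set.mem_singleton_iff.mpr h))
          exact absurd (Set.mem_inter hx2 hx1) (by simp [this])
        · rw [hpost, Set.mem_singleton_iff] at hx1
          exact hbno r2 h2 (hx1 ▸ hx2)
      · rw [Set.mem_singleton_iff] at h1 h2
        exact absurd (h1.trans h2.symm) hne12
    · rintro m ⟨h, hh, rfl⟩
      have hx := hh (ra ∪ N.post t') (Or.inr rfl)
      rcases hx with hx | hx
      · set c : Set Place → Place := fun r => if r = ra then h (ra ∪ N.post t') else h r
          with hcdef
        have hre := treaty_reachable hσ c (fun r hr => by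
          by_cases h1 : r = ra
          · simp only [hcdef, if_pos h1]; exact h1 ▸ hx
          · simp only [hcdef, if_neg h1]
            exact hh r (Or.inl ⟨hr, fun hm => h1 (Set.mem_singleton_iff.mp hm)⟩))
        have hseteq : {p | ∃ r ∈ σ, p = c r}
            = {p | ∃ r ∈ (σ \ {ra}) ∪ {ra ∪ N.post t'}, p = h r} := by
          ext p
          constructor
          · rintro ⟨r, hr, rfl⟩
            by_cases h1 : r = ra
            · exact ⟨ra ∪ N.post t', Or.inr rfl, by simp [hcdef, h1]⟩
            · exact ⟨r, Or.inl ⟨hr, fun hm => h1 (Set.mem_singleton_iff.mp hm)⟩,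
                by simp [hcdef, h1]⟩
          · rintro ⟨r, hr | hr, rfl⟩
            · have h1 : r ≠ ra := fun h => hr.2 (Set.mem_singleton_iff.mpr h)
              exact ⟨r, hr.1, by simp [hcdef, h1]⟩
            · rw [Set.mem_singleton_iff] at hr
              subst hr
              exact ⟨ra, hra, by simp [hcdef]⟩
        rw [hseteq] at hre
        exact hre
      · have hxb : h (ra ∪ N.post t') = b := Set.mem_singleton_iff.mp
          (show h (ra ∪ N.post t') ∈ ({b} : Set Place) from by rw [← hpost]; exact hx)
        set c : Set Place → Place := fun r => if r = ra then a else h r with hcdef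
        have hre := treaty_reachable hσ c (fun r hr => by
          by_cases h1 : r = ra
          · simp only [hcdef, if_pos h1]; exact h1 ▸ haa
          · simp only [hcdef, if_neg h1]
            exact hh r (Or.inl ⟨hr, fun hm => h1 (Set.mem_singleton_iff.mp hm)⟩))
        have hsub : N.pre t' ⊆ {p | ∃ r ∈ σ, p = c r} := by
          rw [hpre]
          rintro x hxm
          rw [Set.mem_singleton_iff] at hxm
          subst hxm
          exact ⟨ra, hra, by simp [hcdef]⟩
        have hre' := reachable_fires hre (⟨hsub, rfl⟩ :
          N.fires _ t' (({p | ∃ r ∈ σ, p = c r} \ N.pre t') ∪ N.post t'))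
        have hseteq : ({p | ∃ r ∈ σ, p = c r} \ N.pre t') ∪ N.post t'
            = {p | ∃ r ∈ (σ \ {ra}) ∪ {ra ∪ N.post t'}, p = h r} := by
          ext p
          constructor
          · rintro (⟨⟨r, hr, rfl⟩, hnp⟩ | hp)
            · by_cases h1 : r = ra
              · exfalso
                apply hnp
                rw [hpre]
                simp [hcdef, h1]
              · exact ⟨r, Or.inl ⟨hr, fun hm => h1 (Set.mem_singleton_iff.mp hm)⟩,
                  by simp [hcdef, h1]⟩
            · rw [hpost, Set.mem_singleton_iff] at hp
              subst hp
              exact ⟨ra ∪ N.post t', Or.inr rfl, hxb.symm⟩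
          · rintro ⟨r, hr | hr, rfl⟩
            · have h1 : r ≠ ra := fun h => hr.2 (Set.mem_singleton_iff.mpr h)
              refine Or.inl ⟨⟨r, hr.1, by simp [hcdef, h1]⟩, ?_⟩
              rw [hpre]
              intro hm
              rw [Set.mem_singleton_iff] at hm
              have : h r ∈ r := hh r (Or.inl hr)
              exact h1 (region_eq_of_mem hσ hr.1 hra (hm ▸ this) haa)
            · rw [Set.mem_singleton_iff] at hr
              subst hr
              rw [hxb]
              exact Or.inr hbpost
        rw [hseteq] at hre'
        exact hre'

lemma diff_preimage {τ : Set (Set Place)} {t : Trans} (hτ : N.IsTerritory τ)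
    {f : Place → Set Place} (hf1 : ∀ p ∈ N.pre t, f p ∈ τ ∧ p ∈ f p) :
    τ \ {r | ∃ p ∈ N.pre t, r = f p} = N.bystanders t τ := by
  ext r
  constructor
  · rintro ⟨hr, hnr⟩
    refine ⟨hr, ?_⟩
    by_contra h
    obtain ⟨q, hq1, hq2⟩ := Set.nonempty_iff_ne_empty.mpr h
    exact hnr ⟨q, hq2, region_eq_of_mem hτ hr (hf1 q hq2).1 hq1 (hf1 q hq2).2⟩
  · rintro ⟨hr, h0⟩
    refine ⟨hr, ?_⟩
    rintro ⟨q, hq, rfl⟩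
    exact absurd (Set.mem_inter (hf1 q hq).2 hq) (by simp [h0])

lemma saturate_decomp {Φ : Type*} {postA : Φ → Trans → Φ} {φ : Φ}
    {rb : Set (Set Place)} (P : Set Place) {σ σ' : Set (Set Place)}
    (hsat : N.SaturateG postA φ rb σ σ') :
    N.IsTerritory σ →
    ∀ g : Place → Set Place,
      (∀ p ∈ P, p ∈ g p ∧ g p ∈ σ) →
      (∀ p1 ∈ P, ∀ p2 ∈ P, p1 ≠ p2 → g p1 ≠ g p2) →
      σ = rb ∪ {r | ∃ p ∈ P, r = g p} →
      N.IsTerritory σ' ∧ ∃ g' : Place → Set Place,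
        (∀ p ∈ P, p ∈ g' p ∧ g' p ∈ σ')
        ∧ (∀ p1 ∈ P, ∀ p2 ∈ P, p1 ≠ p2 → g' p1 ≠ g' p2)
        ∧ σ' = rb ∪ {r | ∃ p ∈ P, r = g' p} := by
  classical
  induction hsat with
  | base h =>
    intro hτ g h1 h2 h3
    exact ⟨hτ, g, h1, h2, h3⟩
  | @step σ t' σ' hext hnf hpa hrb hs ih =>
    intro hτ g hg1 hg2 hg3
    obtain ⟨hen, ⟨a, hpre⟩, -, -⟩ := id hext
    obtain ⟨f, hf1, hf2⟩ := hen
    obtain ⟨hra, haa⟩ := hf1 a (by rw [hpre]; rfl)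
    set ra := f a with hradef
    have heq := extendT_eq hτ hpre hra haa
    have hτ' := extendT_territory hτ hext
    have hranotrb : ra ∉ rb := by
      intro h
      have h2 := (hrb h).2
      rw [hpre, Set.eq_empty_iff_forall_notMem] at h2
      exact h2 a ⟨haa, rfl⟩
    obtain ⟨p0, hp0, hgp0⟩ : ∃ p0 ∈ P, g p0 = ra := by
      have : ra ∈ rb ∪ {r | ∃ p ∈ P, r = g p} := hg3 ▸ hra
      rcases this with h | ⟨p0, hp0, h⟩
      · exact absurd h hranotrb
      · exact ⟨p0, hp0, h.symm⟩
    set g2 : Place → Set Place :=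
      fun p => if g p = ra then ra ∪ N.post t' else g p with hg2def
    refine ih hτ' g2 ?_ ?_ ?_
    · intro p hp
      by_cases h : g p = ra
      · refine ⟨?_, ?_⟩
        · simp only [hg2def, if_pos h]
          exact Or.inl (h ▸ (hg1 p hp).1)
        · simp only [hg2def, if_pos h]
          rw [heq]
          exact Or.inr rfl
      · refine ⟨?_, ?_⟩
        · simp only [hg2def, if_neg h]
          exact (hg1 p hp).1
        · simp only [hg2def, if_neg h]
          rw [heq]
          exact Or.inl ⟨(hg1 p hp).2, fun hm => h (Set.mem_singleton_iff.mp hm)⟩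
    · intro p1 hp1 p2 hp2 hne
      have hgne := hg2 p1 hp1 p2 hp2 hne
      by_cases h1 : g p1 = ra <;> by_cases h2 : g p2 = ra
      · exact absurd (h1.trans h2.symm) hgne
      · simp only [hg2def, if_pos h1, if_neg h2]
        intro heq2
        have hmem : a ∈ g p2 := heq2 ▸ Or.inl haa
        exact h2 (region_eq_of_mem hτ (hg1 p2 hp2).2 hra hmem haa)
      · simp only [hg2def, if_neg h1, if_pos h2]
        intro heq2
        have hmem : a ∈ g p1 := heq2 ▸ Or.inl haa
        exact h1 (region_eq_of_mem hτ (hg1 p1 hp1).2 hra hmem haa)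
      · simpa only [hg2def, if_neg h1, if_neg h2] using hgne
    · rw [heq]
      ext r
      constructor
      · rintro (⟨hr, hrne⟩ | hr)
        · have hrne' : r ≠ ra := fun h => hrne (Set.mem_singleton_iff.mpr h)
          rcases hg3 ▸ hr with h | ⟨p, hp, rfl⟩
          · exact Or.inl h
          · exact Or.inr ⟨p, hp, by simp only [hg2def, if_neg hrne']⟩
        · rw [Set.mem_singleton_iff] at hr
          exact Or.inr ⟨p0, hp0, by simp only [hg2def, if_pos hgp0]; exact hr⟩
      · rintro (hr | ⟨p, hp, rfl⟩)
        · have hrσ : r ∈ σ := hg3 ▸ Or.inl hr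
          have h2 := (hrb hr).2
          rw [hpre, Set.eq_empty_iff_forall_notMem] at h2
          have : r ≠ ra := fun h => h2 a ⟨h ▸ haa, rfl⟩
          exact Or.inl ⟨hrσ, fun hm => this (Set.mem_singleton_iff.mp hm)⟩
        · by_cases h : g p = ra
          · simp only [hg2def, if_pos h]
            exact Or.inr rfl
          · simp only [hg2def, if_neg h]
            exact Or.inl ⟨(hg1 p hp).2, fun hm => h (Set.mem_singleton_iff.mp hm)⟩

lemma step_analysis (D : N.InvDomain)
    {q0 : Set (Set Place) × (State → Prop)}
    {δ0 : Set (Set Place) × (State → Prop) → Trans →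
      Option (Set (Set Place) × (State → Prop))}
    (hsat : N.IsSaturatedG D.postF (fun φ => φ) (fun _ => True) q0 δ0)
    {τ : Set (Set Place)} {φ : State → Prop} {t : Trans}
    {τ' : Set (Set Place)} {φ' : State → Prop}
    (hτ : N.IsTerritory τ) (hδ : δ0 (τ, φ) t = some (τ', φ')) :
    N.IsTerritory τ' ∧ N.terrFires τ t τ' ∧ φ' = D.postF φ t := by
  classical
  have hne : ¬ (¬ N.terrEnabled t τ ∨ ∀ s, ¬ D.postF φ t s) := by
    intro h
    rw [hsat.undefCond τ φ t h] at hδ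
    exact nomatch hδ
  push_neg at hne
  obtain ⟨hen, hs⟩ := hne
  by_cases hself : N.terrFires τ t τ ∧ D.postF φ t = φ
  · have hd := hsat.selfCond τ φ t hen hs hself.1 hself.2
    rw [hd] at hδ
    have h := Option.some.inj hδ
    have hτe : τ' = τ := (congrArg Prod.fst h).symm
    have hφe : φ' = φ := (congrArg Prod.snd h).symm
    subst hτe
    subst hφe
    exact ⟨hτ, hself.1, hself.2.symm⟩
  · obtain ⟨τ'', hsat', hδ'⟩ := hsat.stepCond τ φ t hen hs hself
    rw [hδ'] at hδ
    have h := Option.some.inj hδ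
    have hτe : τ' = τ'' := (congrArg Prod.fst h).symm
    have hφe : φ' = D.postF φ t := (congrArg Prod.snd h).symm
    subst hτe
    have hrep := replaceT_territory hτ hen
    have hdec := saturate_decomp (N.post t) hsat' hrep (fun p => ({p} : Set Place))
      (fun p hp => ⟨rfl, Or.inr ⟨p, hp, rfl⟩⟩)
      (fun p1 _ p2 _ h12 => fun he => h12 (Set.singleton_injective he))
      rfl
    obtain ⟨hter', g', hg1, hg2, hg3⟩ := hdec
    refine ⟨hter', ?_, hφe⟩
    obtain ⟨f, hf1, hf2⟩ := hen
    refine ⟨f, g', hf1, hf2, ?_, hg2, ?_⟩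
    · intro p hp
      exact ⟨hter'.1 (g' p) (hg1 p hp).2, (hg1 p hp).1⟩
    · rw [diff_preimage hτ hf1]
      exact hg3

lemma reach_inv (D : N.InvDomain)
    {q0 : Set (Set Place) × (State → Prop)}
    {δ0 : Set (Set Place) × (State → Prop) → Trans →
      Option (Set (Set Place) × (State → Prop))}
    (hsat : N.IsSaturatedG D.postF (fun φ => φ) (fun _ => True) q0 δ0)
    {q : Set (Set Place) × (State → Prop)} (hq : EmpReach q0 δ0 q) :
    N.IsTerritory q.1 ∧ q.2 ∈ D.A := by
  induction hq with
  | init =>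
    obtain ⟨τ0, hs, hq0⟩ := hsat.initCond
    rw [hq0]
    constructor
    · have hdec := saturate_decomp N.mInit hs tauInit_territory
        (fun p => ({p} : Set Place))
        (fun p hp => ⟨rfl, ⟨p, hp, rfl⟩⟩)
        (fun p1 _ p2 _ h12 => fun he => h12 (Set.singleton_injective he))
        (by rw [Set.empty_union]; rfl)
      exact hdec.1
    · exact D.top_mem
  | @step q t q' _ hd ih =>
    obtain ⟨τ, φ⟩ := q
    obtain ⟨τ', φ'⟩ := q'
    obtain ⟨hter, hφ, hpost⟩ := step_analysis D hsat ih.1 hd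
    exact ⟨hter, hpost ▸ D.post_mem φ ih.2 t⟩

end PetriNet
end GhostsOfEmpires

open GhostsOfEmpires in
/-- Let `E` be a saturated empire, let `⟨τ,φ⟩` be a state of `E`, and
let `t` be a transition such that `⟨τ',φ'⟩ = δ(⟨τ,φ⟩,t)` is defined. Then `τ ▷t τ'`
holds, and the Hoare triple `{φ} λ(t) {φ'}` holds. -/
theorem statement15 {Place Trans Stmt State : Type*}
    [Fintype Place] [Fintype Trans] [Fintype Stmt] [Nonempty State]
    (N : PetriNet Place Trans Stmt State)
    (D : N.InvDomain) (hD : N.SafeDomain D)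
    (q0 : Set (Set Place) × (State → Prop))
    (δ0 : Set (Set Place) × (State → Prop) → Trans →
      Option (Set (Set Place) × (State → Prop)))
    (hsat : N.IsSaturatedG D.postF (fun φ => φ) (fun _ => True) q0 δ0)
    (τ : Set (Set Place)) (φ : State → Prop) (hstate : EmpReach q0 δ0 (τ, φ))
    (t : Trans) (τ' : Set (Set Place)) (φ' : State → Prop)
    (hδ : δ0 (τ, φ) t = some (τ', φ')) :
    N.terrFires τ t τ' ∧ N.Hoare φ (N.label t) φ' := by
  obtain ⟨hterr, hA⟩ := N.reach_inv D hsat hstate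
  obtain ⟨hτ', hfire, hφ'⟩ := N.step_analysis D hsat hterr hδ
  refine ⟨hfire, ?_⟩
  rw [hφ']
  exact D.post_hoare φ hA t
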